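/- If the point P_j lies outside the convex hull of the remaining points {P_i : i ≠ j}, then the power cell of P_j is nonempty: there exists x ∈ ℝⁿ such that f_i(x) ≤ f_j(x) for all i. (This holds for every choice of weights w_1,…,w_N.) -/

import Mathlib

open scoped RealInnerProductSpace

/-- if `P_j` lies outside the convex hull of the other points, then
the power cell of `P_j` is nonempty, whatever the weights. -/
theorem power_cell_nonempty_of_not_mem_convexHull
    (n N : ℕ) (hN : 1 ≤ N)
    (P : Fin N → EuclideanSpace ℝ (Fin n)) (w : Fin N → ℝ)
    (c : Fin N → ℝ) (hc : ∀ i, c i = -((‖P i‖ ^ 2 - w i) / 2))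
    (f : Fin N → EuclideanSpace ℝ (Fin n) → ℝ)
    (hf : ∀ i x, f i x = ⟪x, P i⟫ + c i)
    (j : Fin N)
    (hj : P j ∉ convexHull ℝ {p | ∃ i, i ≠ j ∧ P i = p}) :
    ∃ x : EuclideanSpace ℝ (Fin n), ∀ i, f i x ≤ f j x := by
  classical
  set S := {p : EuclideanSpace ℝ (Fin n) | ∃ i, i ≠ j ∧ P i = p} with hS
  have hSfin : S.Finite := (Set.finite_range P).subset (by
    rintro p ⟨i, -, rfl⟩; exact ⟨i, rfl⟩)
  have hclosed : IsClosed (convexHull ℝ S) := hSfin.isClosed_convexHull (𝕜 := ℝ)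
  obtain ⟨g, u, hgj, hgS⟩ :=
    geometric_hahn_banach_point_closed (convex_convexHull ℝ S) hclosed hj
  set v := (InnerProductSpace.toDual ℝ (EuclideanSpace ℝ (Fin n))).symm g with hv
  have hvb : ∀ b : EuclideanSpace ℝ (Fin n), ⟪v, b⟫ = g b := fun b =>
    InnerProductSpace.toDual_symm_apply
  set ε := u - g (P j) with hε
  have hεpos : 0 < ε := by simp only [hε]; linarith
  have hjmem : j ∈ (Finset.univ : Finset (Fin N)) := Finset.mem_univ j
  set M := Finset.univ.sup' ⟨j, hjmem⟩ (fun i => c i - c j) with hM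
  have hMle : ∀ i : Fin N, c i - c j ≤ M := fun i => by
    rw [hM]; exact Finset.le_sup' (fun i => c i - c j) (Finset.mem_univ i)
  set t := max 0 (M / ε) with ht
  have ht0 : 0 ≤ t := le_max_left _ _
  have htM : M ≤ t * ε := by
    have : M / ε ≤ t := le_max_right _ _
    calc M = (M / ε) * ε := by field_simp
    _ ≤ t * ε := by nlinarith
  refine ⟨(-t) • v, fun i => ?_⟩
  rw [hf, hf]
  rcases eq_or_ne i j with rfl | hij
  · exact le_refl _
  · have hiS : P i ∈ convexHull ℝ S := subset_convexHull ℝ S ⟨i, hij, rfl⟩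
    have hgi : u < g (P i) := hgS _ hiS
    have h1 : ⟪(-t) • v, P i⟫ = -t * g (P i) := by
      rw [real_inner_smul_left, hvb]
    have h2 : ⟪(-t) • v, P j⟫ = -t * g (P j) := by
      rw [real_inner_smul_left, hvb]
    rw [h1, h2]
    have hci : c i - c j ≤ M := hMle i
    nlinarith [mul_nonneg ht0 (le_of_lt hεpos)]
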